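/- arXiv:2501.12000 — 5 statements merged into one kernel-verified Lean document; each statement's English description precedes it below -/
import Mathlib

section
/- Let H^C and H^B be Hermitian operators on a finite-dimensional complex Hilbert space ℋ, let ψ₀ ∈ ℋ be a unit vector, set ψ(t) = exp(−i t H^C) ψ₀, and let E(t) = ⟨ψ(t), H^B ψ(t)⟩. Then the instantaneous charging power P(t) = d/dt E(t) satisfies |P(t)| ≤ ‖[H^C, H^B]‖ ≤ 2 ‖H^C‖ · ‖H^B‖ for every t ∈ ℝ. -/
open NormedSpace ContinuousLinearMap

/-- The instantaneous charging power `P(t) = d/dt ⟨ψ(t), H^B ψ(t)⟩` satisfies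
`|P(t)| ≤ ‖[H^C, H^B]‖ ≤ 2 ‖H^C‖ ‖H^B‖`. -/
theorem instantaneous_power_bound
    {E : Type*} [NormedAddCommGroup E] [InnerProductSpace ℂ E] [FiniteDimensional ℂ E]
    (HC HB : E →L[ℂ] E) (hHC : IsSelfAdjoint HC) (hHB : IsSelfAdjoint HB)
    (ψ₀ : E) (hψ₀ : ‖ψ₀‖ = 1)
    (ψ : ℝ → E) (hψ : ∀ t : ℝ, ψ t = NormedSpace.exp ((-(Complex.I * t)) • HC) ψ₀)
    (t : ℝ) (P : ℝ)
    (hP : HasDerivAt (fun s : ℝ => (inner ℂ (ψ s) (HB (ψ s)) : ℂ).re) P t) :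
    |P| ≤ ‖HC * HB - HB * HC‖ ∧ ‖HC * HB - HB * HC‖ ≤ 2 * ‖HC‖ * ‖HB‖ := by
  set B : E →L[ℂ] E := (-Complex.I) • HC with hB
  have hsmul : ∀ s : ℝ, (-(Complex.I * s)) • HC = s • B := by
    intro s
    rw [hB, smul_comm s, ← algebraMap_smul ℂ s HC, smul_smul, Complex.coe_algebraMap]
    congr 1
    push_cast
    ring
  -- ψ s = exp (s • B) ψ₀, real smul
  have hψ' : ∀ s : ℝ, ψ s = exp (s • B) ψ₀ := by
    intro s; rw [hψ s, hsmul s]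
  -- unitarity: ‖ψ s‖ = 1
  have hmem : ∀ s : ℝ, (-(Complex.I * s)) • HC ∈ skewAdjoint (E →L[ℂ] E) := by
    intro s
    rw [skewAdjoint.mem_iff]
    simp only [star_smul, hHC.star_eq, star_neg, star_mul', Complex.star_def,
      Complex.conj_I, Complex.conj_ofReal]
    simp [neg_smul]
  have hunit : ∀ s : ℝ, exp ((-(Complex.I * s)) • HC) ∈ unitary (E →L[ℂ] E) :=
    letI : NormedAlgebra ℚ (E →L[ℂ] E) := NormedAlgebra.restrictScalars ℚ ℂ _
    fun s => exp_mem_unitary_of_mem_skewAdjoint (hmem s)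
  have hnorm : ∀ s : ℝ, ‖ψ s‖ = 1 := by
    intro s
    have h1 : star (exp ((-(Complex.I * s)) • HC)) * exp ((-(Complex.I * s)) • HC) = 1 :=
      (Unitary.mem_iff.mp (hunit s)).1
    have : ‖ψ s‖ ^ 2 = (1 : ℝ) := by
      rw [hψ s]
      have := congrArg (fun A : E →L[ℂ] E => (inner ℂ (A ψ₀) ψ₀ : ℂ)) h1
      simp only [mul_apply_eq_comp, one_apply] at this
      have h2 : (inner ℂ (exp ((-(Complex.I * s)) • HC) ψ₀) (exp ((-(Complex.I * s)) • HC) ψ₀) : ℂ)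
          = inner ℂ ψ₀ ψ₀ := by
        rw [← ContinuousLinearMap.adjoint_inner_left]
        rw [show ContinuousLinearMap.adjoint (exp ((-(Complex.I * s)) • HC))
          = star (exp ((-(Complex.I * s)) • HC)) from rfl]
        rw [show (star (exp ((-(Complex.I * s)) • HC)))
            ((exp ((-(Complex.I * s)) • HC)) ψ₀)
          = (star (exp ((-(Complex.I * s)) • HC)) * exp ((-(Complex.I * s)) • HC)) ψ₀ from rfl,
          h1, ContinuousLinearMap.one_apply]
      rw [inner_self_eq_norm_sq_to_K, inner_self_eq_norm_sq_to_K] at h2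
      have h3 : ‖(exp ((-(Complex.I * s)) • HC)) ψ₀‖ ^ 2 = ‖ψ₀‖ ^ 2 := by exact_mod_cast h2
      rw [h3, hψ₀, one_pow]
    nlinarith [norm_nonneg (ψ s)]
  -- derivative of ψ
  have hexpR : (exp : (E →L[ℂ] E) → (E →L[ℂ] E)) = exp := rfl
  have hU : HasDerivAt (fun s : ℝ => exp (s • B)) (exp (t • B) * B) t := by
    rw [← hexpR]
    exact hasDerivAt_exp_smul_const B t
  have hψd : HasDerivAt ψ (B (ψ t)) t := by
    have happ : HasDerivAt (fun s : ℝ => exp (s • B) ψ₀) ((exp (t • B) * B) ψ₀) t := by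
      exact (((ContinuousLinearMap.apply ℂ E ψ₀).restrictScalars ℝ).hasFDerivAt.comp_hasDerivAt
        t hU : )
    have hcomm : exp (t • B) * B = B * exp (t • B) :=
      (((Commute.refl B).smul_left (t : ℝ)).exp_left).eq
    have : HasDerivAt ψ ((exp (t • B) * B) ψ₀) t := by
      apply happ.congr_of_eventuallyEq
      filter_upwards with s using (hψ' s)
    rw [hcomm] at this
    simpa [hψ' t] using this
  -- derivative of the energy
  have hE : HasDerivAt (fun s : ℝ => (inner ℂ (ψ s) (HB (ψ s)) : ℂ).re)
      ((inner ℂ (B (ψ t)) (HB (ψ t)) + inner ℂ (ψ t) (HB (B (ψ t))) : ℂ)).re t := by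
    have hHBψ : HasDerivAt (fun s : ℝ => HB (ψ s)) (HB (B (ψ t))) t :=
      ((HB.restrictScalars ℝ).hasFDerivAt.comp_hasDerivAt t hψd : )
    have hinner := hψd.inner ℂ hHBψ
    have h := (Complex.reCLM.hasFDerivAt.comp_hasDerivAt t hinner)
    simpa [Function.comp_def, add_comm] using h
  have hPval : P = ((inner ℂ (B (ψ t)) (HB (ψ t)) + inner ℂ (ψ t) (HB (B (ψ t))) : ℂ)).re :=
    hP.unique hE
  constructor
  · -- main bound
    set C : E →L[ℂ] E := HC * HB - HB * HC with hC
    have hz : (inner ℂ (B (ψ t)) (HB (ψ t)) + inner ℂ (ψ t) (HB (B (ψ t))) : ℂ)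
        = Complex.I * inner ℂ (ψ t) (C (ψ t)) := by
      have hsym : (inner ℂ (HC (ψ t)) (HB (ψ t)) : ℂ) = inner ℂ (ψ t) ((HC * HB) (ψ t)) := by
        conv_lhs => rw [← hHC.adjoint_eq]
        rw [ContinuousLinearMap.adjoint_inner_left]
        rfl
      have h1 : (inner ℂ (B (ψ t)) (HB (ψ t)) : ℂ)
          = Complex.I * inner ℂ (ψ t) ((HC * HB) (ψ t)) := by
        rw [hB]
        simp only [ContinuousLinearMap.smul_apply, inner_smul_left, map_neg, Complex.star_def,
          Complex.conj_I, hsym]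
        ring
      have h2 : (inner ℂ (ψ t) (HB (B (ψ t))) : ℂ)
          = -(Complex.I * inner ℂ (ψ t) ((HB * HC) (ψ t))) := by
        rw [hB]
        simp only [ContinuousLinearMap.smul_apply, map_smul, inner_smul_right, mul_apply_eq_comp]
        ring
      rw [h1, h2, hC]
      simp only [ContinuousLinearMap.sub_apply, inner_sub_right]
      ring
    rw [hPval, hz]
    calc |(Complex.I * inner ℂ (ψ t) (C (ψ t))).re|
        ≤ ‖Complex.I * inner ℂ (ψ t) (C (ψ t))‖ := Complex.abs_re_le_norm _
      _ = ‖(inner ℂ (ψ t) (C (ψ t)) : ℂ)‖ := by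
          rw [norm_mul, Complex.norm_I, one_mul]
      _ ≤ ‖ψ t‖ * ‖C (ψ t)‖ := norm_inner_le_norm _ _
      _ ≤ ‖ψ t‖ * (‖C‖ * ‖ψ t‖) := by
          gcongr
          exact C.le_opNorm _
      _ = ‖C‖ := by rw [hnorm t]; ring
  · calc ‖HC * HB - HB * HC‖ ≤ ‖HC * HB‖ + ‖HB * HC‖ := norm_sub_le _ _
      _ ≤ ‖HC‖ * ‖HB‖ + ‖HB‖ * ‖HC‖ := add_le_add (norm_mul_le _ _) (norm_mul_le _ _)
      _ = 2 * ‖HC‖ * ‖HB‖ := by ring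
end

section
/- Let H^C and H^B be Hermitian operators on a finite-dimensional complex Hilbert space ℋ, let ψ₀ ∈ ℋ be a unit vector, set ψ(t) = exp(−i t H^C) ψ₀ and E(t) = ⟨ψ(t), H^B ψ(t)⟩. Then for every T > 0 the average charging power satisfies |E(T) − E(0)| / T ≤ ‖[H^C, H^B]‖. -/
open NormedSpace ContinuousLinearMap Complex

lemma my_comp_ofReal {E : Type*} [NormedAddCommGroup E] [NormedSpace ℂ E]
    {F : ℂ → E} {F' : E} {t : ℝ} (h : HasDerivAt F F' (t : ℂ)) :
    HasDerivAt (fun s : ℝ => F s) F' t := by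
  simpa [Function.comp_def] using ((h.hasFDerivAt.restrictScalars ℝ).comp t Complex.ofRealCLM.hasFDerivAt).hasDerivAt

/-- The average charging power over `[0, T]` is bounded by `‖[H^C, H^B]‖`. -/
theorem average_power_bound
    {E : Type*} [NormedAddCommGroup E] [InnerProductSpace ℂ E] [FiniteDimensional ℂ E]
    (HC HB : E →L[ℂ] E) (hHC : IsSelfAdjoint HC) (hHB : IsSelfAdjoint HB)
    (ψ₀ : E) (hψ₀ : ‖ψ₀‖ = 1)
    (ψ : ℝ → E) (hψ : ∀ t : ℝ, ψ t = NormedSpace.exp ((-(Complex.I * t)) • HC) ψ₀)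
    (En : ℝ → ℝ) (hEn : ∀ t : ℝ, En t = (inner ℂ (ψ t) (HB (ψ t)) : ℂ).re)
    (T : ℝ) (hT : 0 < T) :
    |En T - En 0| / T ≤ ‖HC * HB - HB * HC‖ := by
  set A : E →L[ℂ] E := (-Complex.I) • HC with hAdef
  set D : E →L[ℂ] E := HC * HB - HB * HC with hDdef
  have hψfun : ψ = fun t : ℝ => NormedSpace.exp ((t : ℂ) • A) ψ₀ := by
    funext t
    rw [hψ t]
    congr 2
    rw [hAdef, smul_smul]
    congr 1
    ring
  -- derivative of ψ
  have hψ' : ∀ t : ℝ, HasDerivAt ψ (A (ψ t)) t := by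
    intro t
    have h1 : HasDerivAt (fun z : ℂ => NormedSpace.exp (z • A) ψ₀)
        ((NormedSpace.exp ((t:ℂ) • A) * A) ψ₀) (t:ℂ) := by
      simpa using (hasDerivAt_exp_smul_const (𝕂 := ℂ) A (t:ℂ)).clm_apply
        (hasDerivAt_const (t:ℂ) ψ₀)
    have h2 := my_comp_ofReal h1
    have hcomm : Commute A (NormedSpace.exp ((t:ℂ) • A)) :=
      ((Commute.refl A).smul_right (t:ℂ)).exp_right
    have h3 : (NormedSpace.exp ((t:ℂ) • A) * A) ψ₀ = A (ψ t) := by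
      rw [← hcomm.eq, ContinuousLinearMap.mul_apply, hψfun]
    rw [← h3, hψfun]
    exact h2
  -- unitarity
  have hA_star : star A = -A := by
    rw [hAdef, star_smul, hHC.star_eq]
    simp
  have hunit : ∀ t : ℝ, star (NormedSpace.exp ((t:ℂ) • A)) * NormedSpace.exp ((t:ℂ) • A)
      = 1 := by
    intro t
    rw [NormedSpace.star_exp]
    have h1 : star ((t:ℂ) • A) = -((t:ℂ) • A) := by
      rw [star_smul, hA_star, Complex.star_def, Complex.conj_ofReal, smul_neg]
    have h2 : NormedSpace.exp (-((t:ℂ) • A) + (t:ℂ) • A)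
        = NormedSpace.exp (-((t:ℂ) • A)) * NormedSpace.exp ((t:ℂ) • A) := by
      let +nondep : NormedAlgebra ℚ (E →L[ℂ] E) := .restrictScalars ℚ ℂ _
      exact NormedSpace.exp_add_of_commute
        (Commute.neg_left (Commute.refl ((t:ℂ) • A)))
    rw [neg_add_cancel, NormedSpace.exp_zero] at h2
    rw [h1, ← h2]
  have hnorm : ∀ t : ℝ, ‖ψ t‖ = 1 := by
    intro t
    have hin : (inner ℂ (ψ t) (ψ t) : ℂ) = inner ℂ ψ₀ ψ₀ := by
      conv_lhs => rw [hψfun]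
      simp only
      rw [← ContinuousLinearMap.adjoint_inner_right, ← ContinuousLinearMap.mul_apply,
        ← ContinuousLinearMap.star_eq_adjoint, hunit t, ContinuousLinearMap.one_apply]
    rw [inner_self_eq_norm_sq_to_K, inner_self_eq_norm_sq_to_K] at hin
    have h2 : ‖ψ t‖ ^ 2 = ‖ψ₀‖ ^ 2 := by
      exact_mod_cast hin
    rw [hψ₀] at h2
    rw [← Real.sqrt_sq (norm_nonneg (ψ t)), h2]
    simp
  -- the energy function as a complex function
  set g : ℝ → ℂ := fun t => inner ℂ (ψ t) (HB (ψ t)) with hgdef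
  have hg' : ∀ t : ℝ, HasDerivAt g (Complex.I * inner ℂ (ψ t) (D (ψ t))) t := by
    intro t
    have hB := ((HB.restrictScalars ℝ).hasFDerivAt (x := ψ t)).comp_hasDerivAt t (hψ' t)
    have h := (hψ' t).inner ℂ hB
    convert h using 1
    · rfl
    · rfl
    simp only [ContinuousLinearMap.coe_restrictScalars', Function.comp_apply]
    have e1 : (inner ℂ (ψ t) (HB (A (ψ t))) : ℂ)
        = -Complex.I * inner ℂ (ψ t) (HB (HC (ψ t))) := by
      rw [hAdef]
      simp [inner_smul_right]
    have e2 : (inner ℂ (A (ψ t)) (HB (ψ t)) : ℂ)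
        = Complex.I * inner ℂ (ψ t) (HC (HB (ψ t))) := by
      rw [hAdef]
      simp only [ContinuousLinearMap.smul_apply, inner_smul_left, map_neg, Complex.conj_I,
        neg_neg]
      congr 1
      exact hHC.isSymmetric (ψ t) (HB (ψ t))
    rw [e1, e2, hDdef]
    simp only [ContinuousLinearMap.sub_apply, ContinuousLinearMap.mul_apply, inner_sub_right]
    ring
  have hbound : ∀ t : ℝ, ‖Complex.I * inner ℂ (ψ t) (D (ψ t))‖ ≤ ‖D‖ := by
    intro t
    rw [norm_mul, Complex.norm_I, one_mul]
    calc ‖(inner ℂ (ψ t) (D (ψ t)) : ℂ)‖ ≤ ‖ψ t‖ * ‖D (ψ t)‖ := norm_inner_le_norm _ _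
      _ ≤ ‖ψ t‖ * (‖D‖ * ‖ψ t‖) := by gcongr; exact D.le_opNorm _
      _ = ‖D‖ := by rw [hnorm t]; ring
  have key : ‖g T - g 0‖ ≤ ‖D‖ * ‖T - 0‖ :=
    convex_univ.norm_image_sub_le_of_norm_hasDerivWithin_le
      (fun x _ => (hg' x).hasDerivWithinAt) (fun x _ => hbound x)
      (Set.mem_univ 0) (Set.mem_univ T)
  rw [div_le_iff₀ hT]
  have habs : |En T - En 0| ≤ ‖g T - g 0‖ := by
    rw [hEn T, hEn 0]
    calc |(inner ℂ (ψ T) (HB (ψ T)) : ℂ).re - (inner ℂ (ψ 0) (HB (ψ 0)) : ℂ).re|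
        = |(g T - g 0).re| := by rw [Complex.sub_re]
      _ ≤ ‖g T - g 0‖ := Complex.abs_re_le_norm _
      _ = ‖g T - g 0‖ := rfl
  calc |En T - En 0| ≤ ‖g T - g 0‖ := habs
    _ ≤ ‖D‖ * ‖T - 0‖ := key
    _ = ‖HC * HB - HB * HC‖ * T := by
        rw [sub_zero, Real.norm_eq_abs, abs_of_pos hT, hDdef]
end

section
/- Let H be a Hermitian operator on a finite-dimensional complex Hilbert space ℋ, let O be any operator on ℋ, let E ≤ E' be real numbers, and let Π_{[E',∞)} and Π_{(−∞,E]} denote the orthogonal spectral projections of H onto the span of its eigenvectors with eigenvalue ≥ E' and ≤ E respectively. Then for every p ≥ 0: ‖Π_{[E',∞)} O Π_{(−∞,E]}‖ ≤ e^{−p(E'−E)} · ‖e^{pH} O e^{−pH}‖. -/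
open NormedSpace ContinuousLinearMap Nat

private lemma exp_apply_eigen {F : Type*} [NormedAddCommGroup F] [NormedSpace ℂ F]
    [CompleteSpace F] (A : F →L[ℂ] F) (x : F) (a : ℂ) (h : A x = a • x) :
    NormedSpace.exp A x = NormedSpace.exp a • x := by
  have hpow : ∀ n : ℕ, (A ^ n) x = a ^ n • x := by
    intro n
    induction n with
    | zero => simp
    | succ n ih =>
      rw [pow_succ, pow_succ, ContinuousLinearMap.mul_apply, h, map_smul, ih, smul_smul, mul_comm]
  have hsA : Summable fun n : ℕ => (n !⁻¹ : ℂ) • A ^ n := NormedSpace.expSeries_summable' A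
  have hsa : Summable fun n : ℕ => (n !⁻¹ : ℂ) • a ^ n := NormedSpace.expSeries_summable' a
  rw [NormedSpace.exp_eq_tsum (𝕂 := ℂ)]
  have h1 : (∑' n : ℕ, (n !⁻¹ : ℂ) • A ^ n) x = ∑' n : ℕ, ((n !⁻¹ : ℂ) • A ^ n) x :=
    ContinuousLinearMap.map_tsum (ContinuousLinearMap.apply ℂ F x) hsA
  rw [h1]
  have h2 : ∀ n : ℕ, ((n !⁻¹ : ℂ) • A ^ n) x = ((n !⁻¹ : ℂ) • a ^ n) • x := by
    intro n
    rw [ContinuousLinearMap.smul_apply, hpow, smul_smul, smul_eq_mul]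
  simp_rw [h2]
  rw [Summable.tsum_smul_const hsa, NormedSpace.exp_eq_tsum (𝕂 := ℂ)]

private lemma diag_opNorm_le {ι F : Type*} [Fintype ι] [NormedAddCommGroup F]
    [InnerProductSpace ℂ F] (B : OrthonormalBasis ι ℂ F) (D : F →L[ℂ] F) (d : ι → ℂ)
    (hD : ∀ i, D (B i) = d i • B i) {M : ℝ} (hM0 : 0 ≤ M) (hM : ∀ i, ‖d i‖ ≤ M) :
    ‖D‖ ≤ M := by
  classical
  refine ContinuousLinearMap.opNorm_le_bound _ hM0 fun x => ?_
  have hx : D x = ∑ i, (B.repr x i * d i) • B i := by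
    conv_lhs => rw [← B.sum_repr x]
    rw [map_sum]
    simp only [map_smul, hD, smul_smul]
  have hrepr : ∀ i, B.repr (D x) i = B.repr x i * d i := by
    intro i
    rw [B.repr_apply_apply, hx]
    exact B.orthonormal.inner_right_fintype _ i
  have hnorm : ‖D x‖ = ‖B.repr (D x)‖ := (B.repr.norm_map (D x)).symm
  rw [hnorm, EuclideanSpace.norm_eq]
  have hxnorm : ‖x‖ = ‖B.repr x‖ := (B.repr.norm_map x).symm
  have hle : ∑ i, ‖B.repr (D x) i‖ ^ 2 ≤ M ^ 2 * ∑ i, ‖B.repr x i‖ ^ 2 := by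
    rw [Finset.mul_sum]
    refine Finset.sum_le_sum fun i _ => ?_
    rw [hrepr i, norm_mul]
    have h1 : ‖B.repr x i‖ * ‖d i‖ ≤ ‖B.repr x i‖ * M :=
      mul_le_mul_of_nonneg_left (hM i) (norm_nonneg _)
    calc (‖B.repr x i‖ * ‖d i‖) ^ 2 ≤ (‖B.repr x i‖ * M) ^ 2 :=
          pow_le_pow_left₀ (by positivity) h1 2
      _ = M ^ 2 * ‖B.repr x i‖ ^ 2 := by ring
  calc Real.sqrt (∑ i, ‖B.repr (D x) i‖ ^ 2)
      ≤ Real.sqrt (M ^ 2 * ∑ i, ‖B.repr x i‖ ^ 2) := Real.sqrt_le_sqrt hle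
    _ = M * Real.sqrt (∑ i, ‖B.repr x i‖ ^ 2) := by
        rw [Real.sqrt_mul (sq_nonneg M), Real.sqrt_sq hM0]
    _ = M * ‖x‖ := by rw [hxnorm, EuclideanSpace.norm_eq]

/-- The orthogonal projection onto the span of the eigenvectors of `H` whose eigenvalues lie
in the set `I ⊆ ℝ`. -/
noncomputable def spectralProj {E : Type*} [NormedAddCommGroup E] [InnerProductSpace ℂ E]
    [FiniteDimensional ℂ E] (H : E →L[ℂ] E) (I : Set ℝ) : E →L[ℂ] E :=
  letI V : Submodule ℂ E :=
    ⨆ (μ : ℝ) (_ : μ ∈ I), Module.End.eigenspace (H : E →ₗ[ℂ] E) (μ : ℂ)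
  V.subtypeL ∘L V.orthogonalProjectionOnto

private lemma spectralProj_apply_eigenbasis_mem
    {𝓗 : Type*} [NormedAddCommGroup 𝓗] [InnerProductSpace ℂ 𝓗] [FiniteDimensional ℂ 𝓗]
    (H : 𝓗 →L[ℂ] 𝓗) (hT : (H : 𝓗 →ₗ[ℂ] 𝓗).IsSymmetric) (I : Set ℝ)
    (i : Fin (Module.finrank ℂ 𝓗)) (hmem : hT.eigenvalues rfl i ∈ I) :
    spectralProj H I (hT.eigenvectorBasis rfl i) = hT.eigenvectorBasis rfl i := by
  set B := hT.eigenvectorBasis rfl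
  set μ := hT.eigenvalues rfl
  set V : Submodule ℂ 𝓗 :=
    ⨆ (ν : ℝ) (_ : ν ∈ I), Module.End.eigenspace (H : 𝓗 →ₗ[ℂ] 𝓗) (ν : ℂ) with hV
  have hBi : B i ∈ Module.End.eigenspace (H : 𝓗 →ₗ[ℂ] 𝓗) ((μ i : ℝ) : ℂ) :=
    (hT.hasEigenvector_eigenvectorBasis rfl i).1
  have hsp : spectralProj H I (B i) = ((V.orthogonalProjectionOnto (B i) : 𝓗)) := rfl
  rw [hsp]
  refine (Submodule.starProjection_eq_self_iff (K := V)).mpr ?_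
  exact le_iSup₂ (f := fun (ν : ℝ) (_ : ν ∈ I) =>
    Module.End.eigenspace (H : 𝓗 →ₗ[ℂ] 𝓗) (ν : ℂ)) (μ i) hmem hBi

private lemma spectralProj_apply_eigenbasis_not_mem
    {𝓗 : Type*} [NormedAddCommGroup 𝓗] [InnerProductSpace ℂ 𝓗] [FiniteDimensional ℂ 𝓗]
    (H : 𝓗 →L[ℂ] 𝓗) (hT : (H : 𝓗 →ₗ[ℂ] 𝓗).IsSymmetric) (I : Set ℝ)
    (i : Fin (Module.finrank ℂ 𝓗)) (hmem : hT.eigenvalues rfl i ∉ I) :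
    spectralProj H I (hT.eigenvectorBasis rfl i) = 0 := by
  set B := hT.eigenvectorBasis rfl
  set μ := hT.eigenvalues rfl
  set V : Submodule ℂ 𝓗 :=
    ⨆ (ν : ℝ) (_ : ν ∈ I), Module.End.eigenspace (H : 𝓗 →ₗ[ℂ] 𝓗) (ν : ℂ) with hV
  have hBi : B i ∈ Module.End.eigenspace (H : 𝓗 →ₗ[ℂ] 𝓗) ((μ i : ℝ) : ℂ) :=
    (hT.hasEigenvector_eigenvectorBasis rfl i).1
  have hsp : spectralProj H I (B i) = ((V.orthogonalProjectionOnto (B i) : 𝓗)) := rfl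
  rw [hsp]
  have horth : B i ∈ Vᗮ := by
    rw [hV, ← Submodule.iInf_orthogonal]
    refine Submodule.mem_iInf _ |>.mpr fun ν => ?_
    by_cases hν : ν ∈ I
    · rw [iSup_pos hν]
      intro u hu
      have hne : (ν : ℂ) ≠ ((μ i : ℝ) : ℂ) := by
        intro hc
        exact hmem (Complex.ofReal_inj.mp hc ▸ hν)
      exact hT.orthogonalFamily_eigenspaces hne ⟨u, hu⟩ ⟨B i, hBi⟩
    · rw [iSup_neg hν, Submodule.bot_orthogonal_eq_top]
      exact Submodule.mem_top
  rw [Submodule.orthogonalProjectionOnto_apply_of_mem_orthogonal horth]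
  simp

/-- For a Hermitian `H`, any operator `O`, `E ≤ E'` and `p ≥ 0`:
`‖Π_{[E',∞)} O Π_{(−∞,E]}‖ ≤ e^{−p(E'−E)} ‖e^{pH} O e^{−pH}‖`. -/
theorem spectral_filter_bound
    {𝓗 : Type*} [NormedAddCommGroup 𝓗] [InnerProductSpace ℂ 𝓗] [FiniteDimensional ℂ 𝓗]
    (H : 𝓗 →L[ℂ] 𝓗) (hH : IsSelfAdjoint H) (O : 𝓗 →L[ℂ] 𝓗)
    (E E' : ℝ) (hEE' : E ≤ E') (p : ℝ) (hp : 0 ≤ p) :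
    ‖spectralProj H (Set.Ici E') * O * spectralProj H (Set.Iic E)‖ ≤
      Real.exp (-p * (E' - E)) *
        ‖NormedSpace.exp ((p : ℂ) • H) * O * NormedSpace.exp (-(p : ℂ) • H)‖ := by
  classical
  have hT : (H : 𝓗 →ₗ[ℂ] 𝓗).IsSymmetric := hH.isSymmetric
  set B := hT.eigenvectorBasis rfl with hB
  set μ := hT.eigenvalues rfl with hμ
  have hHB : ∀ i, H (B i) = ((μ i : ℝ) : ℂ) • B i := fun i =>
    hT.apply_eigenvectorBasis rfl i
  set x : 𝓗 →L[ℂ] 𝓗 := (p : ℂ) • H with hx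
  have hxneg : -(p : ℂ) • H = -x := by rw [hx, neg_smul]
  set eP := NormedSpace.exp x with heP
  set eM := NormedSpace.exp (-x) with heM
  set P' := spectralProj H (Set.Ici E') with hP'
  set P := spectralProj H (Set.Iic E) with hP
  set A := eP * O * eM with hA
  -- inverse identities
  have hMP : eM * eP = 1 := by
    let +nondep : NormedAlgebra ℚ (𝓗 →L[ℂ] 𝓗) := .restrictScalars ℚ ℂ (𝓗 →L[ℂ] 𝓗)
    rw [heM, heP, ← NormedSpace.exp_add_of_commute ((Commute.refl x).neg_left),
      neg_add_cancel, NormedSpace.exp_zero]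
  have hcancel : ∀ Z : 𝓗 →L[ℂ] 𝓗, eM * (eP * Z) = Z := fun Z => by
    rw [← mul_assoc, hMP, one_mul]
  -- factorization
  have hfact : P' * O * P = (P' * eM) * A * (eP * P) := by
    rw [hA]
    simp only [mul_assoc, hcancel]
  -- eigenvector actions
  have hxB : ∀ i, x (B i) = ((p : ℂ) * (μ i : ℝ)) • B i := by
    intro i
    rw [hx, ContinuousLinearMap.smul_apply, hHB, smul_smul]
  have hxnB : ∀ i, (-x) (B i) = (-((p : ℂ) * (μ i : ℝ))) • B i := by
    intro i
    rw [ContinuousLinearMap.neg_apply, hxB, neg_smul]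
  have hePB : ∀ i, eP (B i) = NormedSpace.exp ((p : ℂ) * (μ i : ℝ)) • B i := fun i =>
    exp_apply_eigen x (B i) _ (hxB i)
  have heMB : ∀ i, eM (B i) = NormedSpace.exp (-((p : ℂ) * (μ i : ℝ))) • B i := fun i =>
    exp_apply_eigen (-x) (B i) _ (hxnB i)
  have hexp_norm : ∀ c : ℂ, ‖NormedSpace.exp c‖ = Real.exp c.re := by
    intro c
    rw [← Complex.exp_eq_exp_ℂ, Complex.norm_exp]
  -- norm of P' * eM
  have hD1 : ∀ i, (P' * eM) (B i) =
      (if E' ≤ μ i then NormedSpace.exp (-((p : ℂ) * (μ i : ℝ))) else 0) • B i := by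
    intro i
    rw [ContinuousLinearMap.mul_apply, heMB, map_smul, hP']
    by_cases h : E' ≤ μ i
    · rw [if_pos h,
        spectralProj_apply_eigenbasis_mem H hT (Set.Ici E') i (Set.mem_Ici.mpr h)]
    · rw [if_neg h,
        spectralProj_apply_eigenbasis_not_mem H hT (Set.Ici E') i (by simpa using h),
        smul_zero, zero_smul]
  have hn1 : ‖P' * eM‖ ≤ Real.exp (-(p * E')) := by
    refine diag_opNorm_le B (P' * eM) _ hD1 (Real.exp_nonneg _) fun i => ?_
    by_cases h : E' ≤ μ i
    · rw [if_pos h, hexp_norm]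
      have : (-((p : ℂ) * ((μ i : ℝ) : ℂ))).re = -(p * μ i) := by
        push_cast
        simp
      rw [this]
      exact Real.exp_le_exp.mpr (by nlinarith)
    · rw [if_neg h, norm_zero]
      exact Real.exp_nonneg _
  -- norm of eP * P
  have hD2 : ∀ i, (eP * P) (B i) =
      (if μ i ≤ E then NormedSpace.exp ((p : ℂ) * (μ i : ℝ)) else 0) • B i := by
    intro i
    rw [ContinuousLinearMap.mul_apply, hP]
    by_cases h : μ i ≤ E
    · rw [spectralProj_apply_eigenbasis_mem H hT (Set.Iic E) i (Set.mem_Iic.mpr h),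
        if_pos h, hePB]
    · rw [spectralProj_apply_eigenbasis_not_mem H hT (Set.Iic E) i (by simpa using h),
        if_neg h, map_zero, zero_smul]
  have hn2 : ‖eP * P‖ ≤ Real.exp (p * E) := by
    refine diag_opNorm_le B (eP * P) _ hD2 (Real.exp_nonneg _) fun i => ?_
    by_cases h : μ i ≤ E
    · rw [if_pos h, hexp_norm]
      have : (((p : ℂ)) * ((μ i : ℝ) : ℂ)).re = p * μ i := by
        push_cast
        simp
      rw [this]
      exact Real.exp_le_exp.mpr (by nlinarith)
    · rw [if_neg h, norm_zero]
      exact Real.exp_nonneg _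
  -- combine
  rw [hxneg, ← heM, ← hA, hfact]
  calc ‖(P' * eM) * A * (eP * P)‖
      ≤ ‖P' * eM‖ * ‖A‖ * ‖eP * P‖ :=
        le_trans (norm_mul_le _ _) (by
          have := norm_mul_le (P' * eM) A
          exact mul_le_mul_of_nonneg_right this (norm_nonneg _))
    _ ≤ Real.exp (-(p * E')) * ‖A‖ * Real.exp (p * E) := by
        have h1 : ‖P' * eM‖ * ‖A‖ ≤ Real.exp (-(p * E')) * ‖A‖ :=
          mul_le_mul_of_nonneg_right hn1 (norm_nonneg _)
        have h2 : ‖P' * eM‖ * ‖A‖ * ‖eP * P‖ ≤ Real.exp (-(p * E')) * ‖A‖ * ‖eP * P‖ :=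
          mul_le_mul_of_nonneg_right h1 (norm_nonneg _)
        refine le_trans h2 ?_
        exact mul_le_mul_of_nonneg_left hn2 (by positivity)
    _ = Real.exp (-p * (E' - E)) * ‖A‖ := by
        rw [mul_right_comm, ← Real.exp_add]
        ring_nf
end

section
/- Let ℋ = ⨂_{i=1}^N ℂ^d be the finite tensor product of N copies of ℂ^d. Let (h_Y)_{Y ∈ F} be a finite family of Hermitian operators on ℋ, where each index Y is a nonempty subset of {1,…,N} with |Y| ≤ q, each h_Y is supported on Y, and set H = Σ_{Y ∈ F} h_Y; assume H is g-extensive, i.e., Σ_{Y : i ∈ Y} ‖h_Y‖ ≤ g for every site i. Let O be an operator on ℋ supported on a subset X ⊆ {1,…,N}, and set A = Σ_{Y : Y ∩ X ≠ ∅} ‖h_Y‖. Then for every n ≥ 1 the n-fold nested commutator satisfies ‖ad_H^n(O)‖ ≤ 2^n · ‖O‖ · ∏_{j=0}^{n−1} (A + j·g·q). -/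
/-- The lattice Hilbert space `⨂_{i=1}^N ℂ^d`, realized as `ℂ`-valued functions on
configurations `Fin N → Fin d`. -/
abbrev LatticeSpace (N d : ℕ) := EuclideanSpace ℂ (Fin N → Fin d)

open scoped Classical in
/-- An operator on `⨂_{i=1}^N ℂ^d` is supported on `X ⊆ {1,…,N}` if it acts as the identity on
all tensor factors outside `X`, i.e. its matrix elements vanish unless the configurations agree
outside `X` and depend only on the restrictions of the configurations to `X`. -/
def IsSupportedOn (N d : ℕ) (h : LatticeSpace N d →L[ℂ] LatticeSpace N d)
    (X : Finset (Fin N)) : Prop :=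
  ∃ a : (X → Fin d) → (X → Fin d) → ℂ,
    ∀ σ τ : Fin N → Fin d,
      (inner ℂ (EuclideanSpace.single σ (1 : ℂ)) (h (EuclideanSpace.single τ (1 : ℂ))) : ℂ) =
        if (∀ i ∉ X, σ i = τ i) then a (fun i => σ i) (fun i => τ i) else 0

/-- `adPow H n O` is the `n`-fold iterated commutator `ad_H^n(O)`. -/
noncomputable def adPow {E : Type*} [NormedAddCommGroup E] [InnerProductSpace ℂ E]
    (H : E →L[ℂ] E) : ℕ → (E →L[ℂ] E) → (E →L[ℂ] E)
  | 0, O => O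
  | n + 1, O => H * adPow H n O - adPow H n O * H

namespace NC
variable {N d : ℕ}

noncomputable def M (h : LatticeSpace N d →L[ℂ] LatticeSpace N d) (σ τ : Fin N → Fin d) : ℂ :=
  h (EuclideanSpace.single τ 1) σ

lemma expand (v : LatticeSpace N d) : v = ∑ τ, (v τ) • EuclideanSpace.single τ (1:ℂ) := by
  ext σ; rw [WithLp.ofLp_sum, Finset.sum_apply]; simp [EuclideanSpace.single_apply]

lemma apply_eq (h : LatticeSpace N d →L[ℂ] LatticeSpace N d) (v : LatticeSpace N d)
    (σ : Fin N → Fin d) : h v σ = ∑ τ, v τ * M h σ τ := by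
  conv_lhs => rw [expand v]
  rw [map_sum, WithLp.ofLp_sum, Finset.sum_apply]
  simp [M]

lemma M_ext {h₁ h₂ : LatticeSpace N d →L[ℂ] LatticeSpace N d}
    (H : ∀ σ τ, M h₁ σ τ = M h₂ σ τ) : h₁ = h₂ := by
  ext v σ; rw [apply_eq, apply_eq]; simp only [H]

lemma M_mul (h₁ h₂ : LatticeSpace N d →L[ℂ] LatticeSpace N d) (σ τ : Fin N → Fin d) :
    M (h₁ * h₂) σ τ = ∑ ρ, M h₁ σ ρ * M h₂ ρ τ := by
  show (h₁ (h₂ _)) σ = _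
  rw [apply_eq h₁]
  exact Finset.sum_congr rfl fun ρ _ => by rw [mul_comm]; rfl

lemma M_sub (h₁ h₂ : LatticeSpace N d →L[ℂ] LatticeSpace N d) (σ τ : Fin N → Fin d) :
    M (h₁ - h₂) σ τ = M h₁ σ τ - M h₂ σ τ := rfl

def Msupp (h : LatticeSpace N d →L[ℂ] LatticeSpace N d) (X : Finset (Fin N)) : Prop :=
  (∀ σ τ, M h σ τ ≠ 0 → ∀ i ∉ X, σ i = τ i) ∧
  (∀ σ σ' τ τ' : Fin N → Fin d, (∀ i ∈ X, σ i = σ' i) → (∀ i ∈ X, τ i = τ' i) →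
    (∀ i ∉ X, σ i = τ i) → (∀ i ∉ X, σ' i = τ' i) → M h σ τ = M h σ' τ')

lemma msupp_of_isSupportedOn {h : LatticeSpace N d →L[ℂ] LatticeSpace N d} {X : Finset (Fin N)}
    (hs : IsSupportedOn N d h X) : Msupp h X := by
  obtain ⟨a, ha⟩ := hs
  have spec : ∀ σ τ, M h σ τ =
      if (∀ i ∉ X, σ i = τ i) then a (fun i => σ i) (fun i => τ i) else 0 := by
    intro σ τ
    rw [← ha σ τ]
    simp [M, EuclideanSpace.inner_single_left]
  constructor
  · intro σ τ hM i hi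
    by_cases c : ∀ i ∉ X, σ i = τ i
    · exact c i hi
    · rw [spec, if_neg c] at hM; exact absurd rfl hM
  · intro σ σ' τ τ' hσ hτ hd hd'
    rw [spec, spec, if_pos hd, if_pos hd']
    congr 1
    · exact funext fun i => hσ i i.2
    · exact funext fun i => hτ i i.2

lemma msupp_mono {h : LatticeSpace N d →L[ℂ] LatticeSpace N d} {X X' : Finset (Fin N)}
    (hs : Msupp h X) (hXX' : X ⊆ X') : Msupp h X' := by
  constructor
  · exact fun σ τ hne i hi => hs.1 σ τ hne i (fun h' => hi (hXX' h'))
  · intro σ σ' τ τ' hσ hτ hd hd'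
    by_cases hdia : ∀ i ∉ X, σ i = τ i
    · have hdia' : ∀ i ∉ X, σ' i = τ' i := by
        intro i hiX
        by_cases hiX' : i ∈ X'
        · rw [← hσ i hiX', ← hτ i hiX']; exact hdia i hiX
        · exact hd' i hiX'
      exact hs.2 σ σ' τ τ' (fun i hi => hσ i (hXX' hi)) (fun i hi => hτ i (hXX' hi)) hdia hdia'
    · push_neg at hdia; obtain ⟨i, hiX, hne⟩ := hdia
      have hiX' : i ∈ X' := by by_contra h'; exact hne (hd i h')
      have h1 : M h σ τ = 0 := by by_contra hM; exact hne (hs.1 σ τ hM i hiX)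
      have h2 : M h σ' τ' = 0 := by
        by_contra hM; apply hne
        rw [hσ i hiX', hτ i hiX']; exact hs.1 σ' τ' hM i hiX
      rw [h1, h2]

lemma msupp_sub {h₁ h₂ : LatticeSpace N d →L[ℂ] LatticeSpace N d} {X : Finset (Fin N)}
    (H₁ : Msupp h₁ X) (H₂ : Msupp h₂ X) : Msupp (h₁ - h₂) X := by
  constructor
  · intro σ τ hM i hi
    rw [M_sub] at hM
    by_cases c1 : M h₁ σ τ = 0
    · exact H₂.1 σ τ (fun c2 => hM (by rw [c1, c2, sub_zero])) i hi
    · exact H₁.1 σ τ c1 i hi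
  · intro σ σ' τ τ' hσ hτ hd hd'
    rw [M_sub, M_sub, H₁.2 σ σ' τ τ' hσ hτ hd hd', H₂.2 σ σ' τ τ' hσ hτ hd hd']
end NC

namespace NC
variable {N d : ℕ}
open Finset

lemma msupp_mul {h₁ h₂ : LatticeSpace N d →L[ℂ] LatticeSpace N d} {X Y : Finset (Fin N)}
    (H₁ : Msupp h₁ X) (H₂ : Msupp h₂ Y) : Msupp (h₁ * h₂) (X ∪ Y) := by
  classical
  constructor
  · intro σ τ hM i hi
    rw [Finset.mem_union] at hi; push_neg at hi
    rw [M_mul] at hM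
    obtain ⟨ρ, -, hρ⟩ := Finset.exists_ne_zero_of_sum_ne_zero hM
    have f1 : M h₁ σ ρ ≠ 0 := left_ne_zero_of_mul hρ
    have f2 : M h₂ ρ τ ≠ 0 := right_ne_zero_of_mul hρ
    rw [H₁.1 σ ρ f1 i hi.1, H₂.1 ρ τ f2 i hi.2]
  · intro σ σ' τ τ' hσ hτ hd hd'
    rw [M_mul, M_mul]
    have l1 : ∑ ρ ∈ univ.filter (fun ρ => (∀ i ∉ X, σ i = ρ i) ∧ (∀ i ∉ Y, ρ i = τ i)),
        M h₁ σ ρ * M h₂ ρ τ = ∑ ρ, M h₁ σ ρ * M h₂ ρ τ :=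
      Finset.sum_filter_of_ne (fun ρ _ hne =>
        ⟨H₁.1 σ ρ (left_ne_zero_of_mul hne), H₂.1 ρ τ (right_ne_zero_of_mul hne)⟩)
    have l2 : ∑ ρ ∈ univ.filter (fun ρ => (∀ i ∉ X, σ' i = ρ i) ∧ (∀ i ∉ Y, ρ i = τ' i)),
        M h₁ σ' ρ * M h₂ ρ τ' = ∑ ρ, M h₁ σ' ρ * M h₂ ρ τ' :=
      Finset.sum_filter_of_ne (fun ρ _ hne =>
        ⟨H₁.1 σ' ρ (left_ne_zero_of_mul hne), H₂.1 ρ τ' (right_ne_zero_of_mul hne)⟩)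
    rw [← l1, ← l2]
    refine Finset.sum_nbij' (fun ρ => fun j => if j ∈ X ∪ Y then ρ j else σ' j)
      (fun ρ => fun j => if j ∈ X ∪ Y then ρ j else σ j) ?_ ?_ ?_ ?_ ?_
    · intro ρ hρ
      rw [Finset.mem_filter] at hρ ⊢
      obtain ⟨-, p1, p2⟩ := hρ
      refine ⟨Finset.mem_univ _, ?_, ?_⟩
      · intro i hiX
        beta_reduce
        by_cases hiY : i ∈ Y
        · have hiXY : i ∈ X ∪ Y := Finset.mem_union_right _ hiY
          rw [if_pos hiXY, ← hσ i hiXY]; exact p1 i hiX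
        · rw [if_neg (by simp [hiX, hiY])]
      · intro i hiY
        beta_reduce
        by_cases hiX : i ∈ X
        · have hiXY : i ∈ X ∪ Y := Finset.mem_union_left _ hiX
          rw [if_pos hiXY, ← hτ i hiXY]; exact p2 i hiY
        · rw [if_neg (by simp [hiX, hiY])]; exact hd' i (by simp [hiX, hiY])
    · intro ρ hρ
      rw [Finset.mem_filter] at hρ ⊢
      obtain ⟨-, p1, p2⟩ := hρ
      refine ⟨Finset.mem_univ _, ?_, ?_⟩
      · intro i hiX
        beta_reduce
        by_cases hiY : i ∈ Y
        · have hiXY : i ∈ X ∪ Y := Finset.mem_union_right _ hiY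
          rw [if_pos hiXY, hσ i hiXY]; exact p1 i hiX
        · rw [if_neg (by simp [hiX, hiY])]
      · intro i hiY
        beta_reduce
        by_cases hiX : i ∈ X
        · have hiXY : i ∈ X ∪ Y := Finset.mem_union_left _ hiX
          rw [if_pos hiXY, hτ i hiXY]; exact p2 i hiY
        · rw [if_neg (by simp [hiX, hiY])]; exact hd i (by simp [hiX, hiY])
    · intro ρ hρ
      rw [Finset.mem_filter] at hρ
      funext k
      by_cases hk : k ∈ X ∪ Y <;> simp only [hk, if_pos, if_neg, if_true, if_false]
      exact hρ.2.1 k (fun hkX => hk (Finset.mem_union_left _ hkX))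
    · intro ρ hρ
      rw [Finset.mem_filter] at hρ
      funext k
      by_cases hk : k ∈ X ∪ Y <;> simp only [hk, if_pos, if_neg, if_true, if_false]
      exact hρ.2.1 k (fun hkX => hk (Finset.mem_union_left _ hkX))
    · intro ρ hρ
      rw [Finset.mem_filter] at hρ
      obtain ⟨-, p1, p2⟩ := hρ
      have e1 : M h₁ σ ρ = M h₁ σ' (fun j => if j ∈ X ∪ Y then ρ j else σ' j) := by
        refine H₁.2 σ σ' ρ _ (fun i hi => hσ i (Finset.mem_union_left _ hi))
          (fun i hi => (if_pos (Finset.mem_union_left _ hi)).symm) p1 ?_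
        intro i hiX
        beta_reduce
        by_cases hiY : i ∈ Y
        · have hiXY : i ∈ X ∪ Y := Finset.mem_union_right _ hiY
          rw [if_pos hiXY, ← hσ i hiXY]; exact p1 i hiX
        · rw [if_neg (by simp [hiX, hiY])]
      have e2 : M h₂ ρ τ = M h₂ (fun j => if j ∈ X ∪ Y then ρ j else σ' j) τ' := by
        refine H₂.2 ρ _ τ τ' (fun i hi => (if_pos (Finset.mem_union_right _ hi)).symm)
          (fun i hi => hτ i (Finset.mem_union_right _ hi)) p2 ?_
        intro i hiY
        beta_reduce
        by_cases hiX : i ∈ X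
        · have hiXY : i ∈ X ∪ Y := Finset.mem_union_left _ hiX
          rw [if_pos hiXY, ← hτ i hiXY]; exact p2 i hiY
        · rw [if_neg (by simp [hiX, hiY])]; exact hd' i (by simp [hiX, hiY])
      rw [e1, e2]
end NC

namespace NC
open Finset
variable {N d : ℕ}

lemma msupp_comm {h₁ h₂ : LatticeSpace N d →L[ℂ] LatticeSpace N d} {X Y : Finset (Fin N)}
    (H₁ : Msupp h₁ X) (H₂ : Msupp h₂ Y) (hXY : Disjoint X Y) : h₁ * h₂ = h₂ * h₁ := by
  classical
  have hdisj : ∀ i, i ∈ X → i ∉ Y := fun i hi => Finset.disjoint_left.mp hXY hi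
  apply M_ext; intro σ τ
  rw [M_mul, M_mul]
  by_cases hdia : ∀ i ∉ (X ∪ Y : Finset (Fin N)), σ i = τ i
  · have hXY' : ∀ i, i ∈ X → i ∉ Y := hdisj
    set ρ₀ : Fin N → Fin d := fun i => if i ∈ X then τ i else σ i with hρ₀
    set ρ₁ : Fin N → Fin d := fun i => if i ∈ Y then τ i else σ i with hρ₁
    rw [Finset.sum_eq_single ρ₀ (by
      intro ρ _ hne
      by_contra hz
      apply hne
      have f1 := H₁.1 σ ρ (left_ne_zero_of_mul hz)
      have f2 := H₂.1 ρ τ (right_ne_zero_of_mul hz)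
      funext k
      by_cases hk : k ∈ X
      · rw [hρ₀]; beta_reduce; rw [if_pos hk]; exact f2 k (hXY' k hk)
      · rw [hρ₀]; beta_reduce; rw [if_neg hk]; exact (f1 k hk).symm)
      (fun h => absurd (Finset.mem_univ _) h)]
    rw [Finset.sum_eq_single ρ₁ (by
      intro ρ _ hne
      by_contra hz
      apply hne
      have f1 := H₂.1 σ ρ (left_ne_zero_of_mul hz)
      have f2 := H₁.1 ρ τ (right_ne_zero_of_mul hz)
      funext k
      by_cases hk : k ∈ Y
      · rw [hρ₁]; beta_reduce; rw [if_pos hk]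
        exact f2 k (fun hkX => (hXY' k hkX) hk)
      · rw [hρ₁]; beta_reduce; rw [if_neg hk]; exact (f1 k hk).symm)
      (fun h => absurd (Finset.mem_univ _) h)]
    have e1 : M h₁ σ ρ₀ = M h₁ ρ₁ τ := by
      refine H₁.2 σ ρ₁ ρ₀ τ ?_ ?_ ?_ ?_
      · intro i hi; rw [hρ₁]; beta_reduce; rw [if_neg (hXY' i hi)]
      · intro i hi; rw [hρ₀]; beta_reduce; rw [if_pos hi]
      · intro i hi; rw [hρ₀]; beta_reduce; rw [if_neg hi]
      · intro i hi
        rw [hρ₁]; beta_reduce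
        by_cases hiY : i ∈ Y
        · rw [if_pos hiY]
        · rw [if_neg hiY]; exact hdia i (by simp [hi, hiY])
    have e2 : M h₂ ρ₀ τ = M h₂ σ ρ₁ := by
      refine H₂.2 ρ₀ σ τ ρ₁ ?_ ?_ ?_ ?_
      · intro i hi; rw [hρ₀]; beta_reduce
        rw [if_neg (fun hX => (hXY' i hX) hi)]
      · intro i hi; rw [hρ₁]; beta_reduce; rw [if_pos hi]
      · intro i hi
        rw [hρ₀]; beta_reduce
        by_cases hiX : i ∈ X
        · rw [if_pos hiX]
        · rw [if_neg hiX]; exact hdia i (by simp [hi, hiX])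
      · intro i hi; rw [hρ₁]; beta_reduce; rw [if_neg hi]
    rw [e1, e2, mul_comm]
  · push_neg at hdia
    obtain ⟨i, hi, hne⟩ := hdia
    rw [Finset.mem_union] at hi; push_neg at hi
    rw [Finset.sum_eq_zero, Finset.sum_eq_zero]
    · intro ρ _
      by_contra hz
      exact hne ((H₂.1 σ ρ (left_ne_zero_of_mul hz) i hi.2).trans
        (H₁.1 ρ τ (right_ne_zero_of_mul hz) i hi.1))
    · intro ρ _
      by_contra hz
      exact hne ((H₁.1 σ ρ (left_ne_zero_of_mul hz) i hi.1).trans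
        (H₂.1 ρ τ (right_ne_zero_of_mul hz) i hi.2))
end NC

namespace NC
open Finset
variable {N d : ℕ}

noncomputable def seqComm (hB : Finset (Fin N) → (LatticeSpace N d →L[ℂ] LatticeSpace N d))
    (O : LatticeSpace N d →L[ℂ] LatticeSpace N d) :
    (m : ℕ) → (Fin m → Finset (Fin N)) → (LatticeSpace N d →L[ℂ] LatticeSpace N d)
  | 0, _ => O
  | m + 1, y => hB (y 0) * seqComm hB O m (Fin.tail y)
      - seqComm hB O m (Fin.tail y) * hB (y 0)

variable {hB : Finset (Fin N) → (LatticeSpace N d →L[ℂ] LatticeSpace N d)}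
    {O : LatticeSpace N d →L[ℂ] LatticeSpace N d} {X : Finset (Fin N)}

lemma seqComm_msupp (hO : Msupp O X) :
    ∀ (m : ℕ) (y : Fin m → Finset (Fin N)), (∀ i, Msupp (hB (y i)) (y i)) →
      Msupp (seqComm hB O m y) (X ∪ univ.biUnion y)
  | 0, y, _ => msupp_mono hO Finset.subset_union_left
  | m + 1, y, hy => by
    have IH := seqComm_msupp hO m (Fin.tail y) (fun i => hy i.succ)
    have hsub : X ∪ univ.biUnion (Fin.tail y) ⊆ X ∪ univ.biUnion y := by
      apply Finset.union_subset_union_right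
      intro a ha
      rw [Finset.mem_biUnion] at ha ⊢
      obtain ⟨i, -, hi⟩ := ha
      exact ⟨i.succ, Finset.mem_univ _, hi⟩
    have hy0 : y 0 ⊆ X ∪ univ.biUnion y := fun a ha =>
      Finset.mem_union_right _ (Finset.mem_biUnion.mpr ⟨0, Finset.mem_univ _, ha⟩)
    show Msupp (hB (y 0) * seqComm hB O m (Fin.tail y)
      - seqComm hB O m (Fin.tail y) * hB (y 0)) _
    exact msupp_sub
      (msupp_mono (msupp_mul (hy 0) IH) (Finset.union_subset hy0 hsub))
      (msupp_mono (msupp_mul IH (hy 0)) (Finset.union_subset hsub hy0))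

lemma seqComm_norm (m : ℕ) (y : Fin m → Finset (Fin N)) :
      ‖seqComm hB O m y‖ ≤ 2 ^ m * (∏ i, ‖hB (y i)‖) * ‖O‖ := by
  induction m with
  | zero =>
    show ‖O‖ ≤ _
    simp only [pow_zero, Finset.univ_eq_empty, Finset.prod_empty, one_mul, mul_one, le_refl]
  | succ m IH' =>
    have IH := IH' (Fin.tail y)
    show ‖hB (y 0) * seqComm hB O m (Fin.tail y)
      - seqComm hB O m (Fin.tail y) * hB (y 0)‖ ≤ _
    have h1 : ‖hB (y 0) * seqComm hB O m (Fin.tail y)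
        - seqComm hB O m (Fin.tail y) * hB (y 0)‖
        ≤ 2 * ‖hB (y 0)‖ * ‖seqComm hB O m (Fin.tail y)‖ := by
      calc _ ≤ ‖hB (y 0) * seqComm hB O m (Fin.tail y)‖
          + ‖seqComm hB O m (Fin.tail y) * hB (y 0)‖ := norm_sub_le _ _
        _ ≤ ‖hB (y 0)‖ * ‖seqComm hB O m (Fin.tail y)‖
          + ‖seqComm hB O m (Fin.tail y)‖ * ‖hB (y 0)‖ :=
            add_le_add (norm_mul_le _ _) (norm_mul_le _ _)
        _ = 2 * ‖hB (y 0)‖ * ‖seqComm hB O m (Fin.tail y)‖ := by ring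
    calc _ ≤ 2 * ‖hB (y 0)‖ * ‖seqComm hB O m (Fin.tail y)‖ := h1
      _ ≤ 2 * ‖hB (y 0)‖ * (2 ^ m * (∏ i, ‖hB (Fin.tail y i)‖) * ‖O‖) := by
          apply mul_le_mul_of_nonneg_left IH
          positivity
      _ = 2 ^ (m + 1) * (∏ i, ‖hB (y i)‖) * ‖O‖ := by
          rw [Fin.prod_univ_succ]
          show (2:ℝ) * ‖hB (y 0)‖ * (2 ^ m * (∏ i : Fin m, ‖hB (y i.succ)‖) * ‖O‖) = _
          ring

lemma seqComm_succ_eq_zero (hO : Msupp O X) (m : ℕ) (y : Fin (m + 1) → Finset (Fin N))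
    (hy : ∀ i, Msupp (hB (y i)) (y i))
    (hdisj : Disjoint (y 0) (X ∪ univ.biUnion (Fin.tail y))) :
    seqComm hB O (m + 1) y = 0 := by
  have IH := seqComm_msupp hO m (Fin.tail y) (fun i => hy i.succ)
  have := msupp_comm (hy 0) IH hdisj
  show hB (y 0) * seqComm hB O m (Fin.tail y) - seqComm hB O m (Fin.tail y) * hB (y 0) = 0
  rw [this, sub_self]

lemma adPow_rep {F : Finset (Finset (Fin N))}
    {H : LatticeSpace N d →L[ℂ] LatticeSpace N d} (hH : H = ∑ Y ∈ F, hB Y) :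
    ∀ m : ℕ, adPow H m O = ∑ y ∈ Fintype.piFinset (fun _ : Fin m => F), seqComm hB O m y := by
  intro m
  induction m with
  | zero =>
    have hu : Fintype.piFinset (fun _ : Fin 0 => F) = {(default : Fin 0 → Finset (Fin N))} :=
      Finset.eq_singleton_iff_unique_mem.mpr
        ⟨Fintype.mem_piFinset.mpr (fun i => i.elim0), fun y _ => Subsingleton.elim y default⟩
    rw [hu, Finset.sum_singleton]
    rfl
  | succ m IH =>
    have reindex : ∑ y ∈ Fintype.piFinset (fun _ : Fin (m+1) => F), seqComm hB O (m+1) y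
        = ∑ p ∈ F ×ˢ Fintype.piFinset (fun _ : Fin m => F),
            (hB p.1 * seqComm hB O m p.2 - seqComm hB O m p.2 * hB p.1) := by
      refine (Finset.sum_nbij' (fun y => (y 0, Fin.tail y))
        (fun p => Fin.cons p.1 p.2) ?_ ?_ ?_ ?_ ?_).symm.symm
      · intro y hy
        rw [Fintype.mem_piFinset] at hy
        rw [Finset.mem_product]
        exact ⟨hy 0, Fintype.mem_piFinset.mpr (fun i => hy i.succ)⟩
      · intro p hp
        rw [Finset.mem_product] at hp
        rw [Fintype.mem_piFinset]
        intro i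
        refine Fin.cases ?_ ?_ i
        · simpa using hp.1
        · intro j; simpa using Fintype.mem_piFinset.mp hp.2 j
      · intro y _; exact Fin.cons_self_tail y
      · intro p _; simp
      · intro y _
        show seqComm hB O (m+1) y = _
        simp only [seqComm, Fin.tail]
    rw [reindex, Finset.sum_product]
    show H * adPow H m O - adPow H m O * H = _
    rw [IH, hH, Finset.sum_mul, Finset.mul_sum]
    rw [← Finset.sum_sub_distrib]
    refine Finset.sum_congr rfl fun Y hY => ?_
    rw [Finset.mul_sum, Finset.sum_mul, ← Finset.sum_sub_distrib]
end NC

namespace NC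
open Finset
variable {N d : ℕ}
variable {hB : Finset (Fin N) → (LatticeSpace N d →L[ℂ] LatticeSpace N d)}
    {O : LatticeSpace N d →L[ℂ] LatticeSpace N d} {X : Finset (Fin N)}

lemma sum_filter_inter_le {F : Finset (Finset (Fin N))} {g A : ℝ}
    (hext : ∀ i : Fin N, ∑ Y ∈ F.filter (fun Y => i ∈ Y), ‖hB Y‖ ≤ g)
    (hA : A = ∑ Y ∈ F.filter (fun Y => (Y ∩ X).Nonempty), ‖hB Y‖)
    (U : Finset (Fin N)) :
    ∑ Y ∈ F.filter (fun Y => (Y ∩ (X ∪ U)).Nonempty), ‖hB Y‖ ≤ A + g * U.card := by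
  classical
  set F₁ := F.filter (fun Y => (Y ∩ X).Nonempty) with hF₁
  set F₂ := F.filter (fun Y => (Y ∩ U).Nonempty) with hF₂
  have hsub : F.filter (fun Y => (Y ∩ (X ∪ U)).Nonempty) ⊆ F₁ ∪ F₂ := by
    intro Y hY
    rw [Finset.mem_filter] at hY
    obtain ⟨i, hi⟩ := hY.2
    rw [Finset.mem_inter, Finset.mem_union] at hi
    rw [Finset.mem_union, hF₁, hF₂, Finset.mem_filter, Finset.mem_filter]
    rcases hi.2 with h | h
    · exact Or.inl ⟨hY.1, ⟨i, Finset.mem_inter.mpr ⟨hi.1, h⟩⟩⟩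
    · exact Or.inr ⟨hY.1, ⟨i, Finset.mem_inter.mpr ⟨hi.1, h⟩⟩⟩
  have step1 : ∑ Y ∈ F.filter (fun Y => (Y ∩ (X ∪ U)).Nonempty), ‖hB Y‖
      ≤ ∑ Y ∈ F₁ ∪ F₂, ‖hB Y‖ :=
    Finset.sum_le_sum_of_subset_of_nonneg hsub (fun _ _ _ => norm_nonneg _)
  have step2 : ∑ Y ∈ F₁ ∪ F₂, ‖hB Y‖ ≤ ∑ Y ∈ F₁, ‖hB Y‖ + ∑ Y ∈ F₂, ‖hB Y‖ := by
    rw [← Finset.union_sdiff_self_eq_union, Finset.sum_union Finset.disjoint_sdiff]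
    exact add_le_add_right (Finset.sum_le_sum_of_subset_of_nonneg
      (Finset.sdiff_subset) (fun _ _ _ => norm_nonneg _)) _
  have step3 : ∑ Y ∈ F₂, ‖hB Y‖ ≤ g * U.card := by
    have c1 : ∑ Y ∈ F₂, ‖hB Y‖ ≤ ∑ Y ∈ F₂, ∑ i ∈ U, (if i ∈ Y then ‖hB Y‖ else 0) := by
      refine Finset.sum_le_sum fun Y hY => ?_
      rw [hF₂, Finset.mem_filter] at hY
      obtain ⟨i₀, hi₀⟩ := hY.2
      rw [Finset.mem_inter] at hi₀
      calc ‖hB Y‖ = (if i₀ ∈ Y then ‖hB Y‖ else 0) := (if_pos hi₀.1).symm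
        _ ≤ ∑ i ∈ U, (if i ∈ Y then ‖hB Y‖ else 0) :=
            Finset.single_le_sum (f := fun i => if i ∈ Y then ‖hB Y‖ else 0)
              (fun i _ => by positivity) hi₀.2
    have c2 : ∑ Y ∈ F₂, ∑ i ∈ U, (if i ∈ Y then ‖hB Y‖ else 0)
        = ∑ i ∈ U, ∑ Y ∈ F₂, (if i ∈ Y then ‖hB Y‖ else 0) := Finset.sum_comm
    have c3 : ∀ i, ∑ Y ∈ F₂, (if i ∈ Y then ‖hB Y‖ else 0) ≤ g := by
      intro i
      rw [← Finset.sum_filter]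
      refine le_trans (Finset.sum_le_sum_of_subset_of_nonneg ?_
        (fun _ _ _ => norm_nonneg _)) (hext i)
      intro Y hY
      rw [Finset.mem_filter] at hY ⊢
      rw [hF₂, Finset.mem_filter] at hY
      exact ⟨hY.1.1, hY.2⟩
    calc ∑ Y ∈ F₂, ‖hB Y‖ ≤ ∑ i ∈ U, ∑ Y ∈ F₂, (if i ∈ Y then ‖hB Y‖ else 0) := by
          rw [← c2]; exact c1
      _ ≤ ∑ _i ∈ U, g := Finset.sum_le_sum (fun i _ => c3 i)
      _ = g * U.card := by rw [Finset.sum_const, nsmul_eq_mul, mul_comm]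
  calc ∑ Y ∈ F.filter (fun Y => (Y ∩ (X ∪ U)).Nonempty), ‖hB Y‖
      ≤ ∑ Y ∈ F₁, ‖hB Y‖ + ∑ Y ∈ F₂, ‖hB Y‖ := le_trans step1 step2
    _ ≤ A + g * U.card := by rw [hA]; exact add_le_add_right step3 _
end NC

namespace NC
open Finset
variable {N d : ℕ}
variable {hB : Finset (Fin N) → (LatticeSpace N d →L[ℂ] LatticeSpace N d)}
    {O : LatticeSpace N d →L[ℂ] LatticeSpace N d} {X : Finset (Fin N)}

lemma comm_norm_le (a b : LatticeSpace N d →L[ℂ] LatticeSpace N d) :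
    ‖a * b - b * a‖ ≤ 2 * ‖a‖ * ‖b‖ := by
  calc ‖a * b - b * a‖ ≤ ‖a * b‖ + ‖b * a‖ := norm_sub_le _ _
    _ ≤ ‖a‖ * ‖b‖ + ‖b‖ * ‖a‖ := add_le_add (norm_mul_le _ _) (norm_mul_le _ _)
    _ = 2 * ‖a‖ * ‖b‖ := by ring

lemma sum_norm_bound {F : Finset (Finset (Fin N))} {g A : ℝ} {q : ℕ}
    (hO : Msupp O X)
    (hsuppM : ∀ Y ∈ F, Msupp (hB Y) Y)
    (hloc : ∀ Y ∈ F, Y.card ≤ q)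
    (hext : ∀ i : Fin N, ∑ Y ∈ F.filter (fun Y => i ∈ Y), ‖hB Y‖ ≤ g)
    (hA : A = ∑ Y ∈ F.filter (fun Y => (Y ∩ X).Nonempty), ‖hB Y‖)
    (hg : 0 ≤ g) (hA0 : 0 ≤ A) (m : ℕ) :
    ∑ y ∈ Fintype.piFinset (fun _ : Fin m => F), ‖seqComm hB O m y‖
      ≤ 2 ^ m * ‖O‖ * ∏ j ∈ Finset.range m, (A + j * (g * q)) := by
  classical
  induction m with
  | zero =>
    have hu : Fintype.piFinset (fun _ : Fin 0 => F) = {(default : Fin 0 → Finset (Fin N))} :=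
      Finset.eq_singleton_iff_unique_mem.mpr
        ⟨Fintype.mem_piFinset.mpr (fun i => i.elim0), fun y _ => Subsingleton.elim y default⟩
    rw [hu, Finset.sum_singleton]
    show ‖O‖ ≤ _
    simp only [pow_zero, Finset.range_zero, Finset.prod_empty, one_mul, mul_one, le_refl]
  | succ m IH =>
    have reindex : ∑ y ∈ Fintype.piFinset (fun _ : Fin (m+1) => F), ‖seqComm hB O (m+1) y‖
        = ∑ p ∈ F ×ˢ Fintype.piFinset (fun _ : Fin m => F),
            ‖hB p.1 * seqComm hB O m p.2 - seqComm hB O m p.2 * hB p.1‖ := by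
      refine Finset.sum_nbij' (fun y => (y 0, Fin.tail y))
        (fun p => Fin.cons p.1 p.2) ?_ ?_ ?_ ?_ ?_
      · intro y hy
        rw [Fintype.mem_piFinset] at hy
        rw [Finset.mem_product]
        exact ⟨hy 0, Fintype.mem_piFinset.mpr (fun i => hy i.succ)⟩
      · intro p hp
        rw [Finset.mem_product] at hp
        rw [Fintype.mem_piFinset]
        intro i
        refine Fin.cases ?_ ?_ i
        · simpa using hp.1
        · intro j; simpa using Fintype.mem_piFinset.mp hp.2 j
      · intro y _; exact Fin.cons_self_tail y
      · intro p _; simp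
      · intro y _
        show ‖seqComm hB O (m+1) y‖ = _
        simp only [seqComm, Fin.tail]
    rw [reindex, Finset.sum_product_right]
    have inner : ∀ y ∈ Fintype.piFinset (fun _ : Fin m => F),
        ∑ Y ∈ F, ‖hB Y * seqComm hB O m y - seqComm hB O m y * hB Y‖
          ≤ 2 * (A + m * (g * q)) * ‖seqComm hB O m y‖ := by
      intro y hy
      have hyF : ∀ i, y i ∈ F := Fintype.mem_piFinset.mp hy
      set T := seqComm hB O m y with hT
      set U := (univ : Finset (Fin m)).biUnion y with hU
      have hTsupp : Msupp T (X ∪ U) := seqComm_msupp hO m y (fun i => hsuppM _ (hyF i))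
      have vanish : ∀ Y ∈ F, ‖hB Y * T - T * hB Y‖ ≠ 0 → (Y ∩ (X ∪ U)).Nonempty := by
        intro Y hYF hnz
        by_contra hempty
        apply hnz
        rw [Finset.not_nonempty_iff_eq_empty] at hempty
        have hdisj : Disjoint Y (X ∪ U) := Finset.disjoint_iff_inter_eq_empty.mpr hempty
        rw [msupp_comm (hsuppM Y hYF) hTsupp hdisj, sub_self, norm_zero]
      rw [← Finset.sum_filter_of_ne vanish]
      have hUcard : (U.card : ℝ) ≤ (m * q : ℕ) := by
        have h1 : U.card ≤ ∑ i : Fin m, (y i).card := Finset.card_biUnion_le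
        have h2 : ∑ i : Fin m, (y i).card ≤ m * q := by
          calc ∑ i : Fin m, (y i).card ≤ ∑ _i : Fin m, q :=
              Finset.sum_le_sum (fun i _ => hloc _ (hyF i))
            _ = m * q := by simp [Finset.sum_const, mul_comm]
        exact_mod_cast le_trans h1 h2
      calc ∑ Y ∈ F.filter (fun Y => (Y ∩ (X ∪ U)).Nonempty), ‖hB Y * T - T * hB Y‖
          ≤ ∑ Y ∈ F.filter (fun Y => (Y ∩ (X ∪ U)).Nonempty), 2 * ‖hB Y‖ * ‖T‖ :=
            Finset.sum_le_sum (fun Y _ => comm_norm_le _ _)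
        _ = 2 * ‖T‖ * ∑ Y ∈ F.filter (fun Y => (Y ∩ (X ∪ U)).Nonempty), ‖hB Y‖ := by
            rw [Finset.mul_sum]; exact Finset.sum_congr rfl fun Y _ => by ring
        _ ≤ 2 * ‖T‖ * (A + g * U.card) := by
            apply mul_le_mul_of_nonneg_left (sum_filter_inter_le hext hA U)
            positivity
        _ ≤ 2 * ‖T‖ * (A + m * (g * q)) := by
            have hc : (U.card : ℝ) ≤ (m : ℝ) * (q : ℝ) := by push_cast at hUcard; exact hUcard
            have h2 : g * (U.card : ℝ) ≤ (m : ℝ) * (g * (q : ℝ)) := by nlinarith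
            have hT0 : (0:ℝ) ≤ 2 * ‖T‖ := by positivity
            exact mul_le_mul_of_nonneg_left (add_le_add_right h2 A) hT0
        _ = 2 * (A + m * (g * q)) * ‖T‖ := by ring
    calc ∑ y ∈ Fintype.piFinset (fun _ : Fin m => F), ∑ Y ∈ F,
            ‖hB Y * seqComm hB O m y - seqComm hB O m y * hB Y‖
        ≤ ∑ y ∈ Fintype.piFinset (fun _ : Fin m => F),
            2 * (A + m * (g * q)) * ‖seqComm hB O m y‖ :=
          Finset.sum_le_sum inner
      _ = 2 * (A + m * (g * q)) * ∑ y ∈ Fintype.piFinset (fun _ : Fin m => F),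
            ‖seqComm hB O m y‖ := by rw [Finset.mul_sum]
      _ ≤ 2 * (A + m * (g * q)) * (2 ^ m * ‖O‖ * ∏ j ∈ Finset.range m, (A + j * (g * q))) := by
          apply mul_le_mul_of_nonneg_left IH
          positivity
      _ = 2 ^ (m + 1) * ‖O‖ * ∏ j ∈ Finset.range (m + 1), (A + j * (g * q)) := by
          rw [Finset.prod_range_succ]
          ring
end NC


/-- For a `q`-local `g`-extensive Hamiltonian `H = Σ_Y h_Y` and an operator `O` supported on `X`,
with `A = Σ_{Y ∩ X ≠ ∅} ‖h_Y‖`, the nested commutators satisfy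
`‖ad_H^n(O)‖ ≤ 2ⁿ ‖O‖ ∏_{j=0}^{n−1} (A + j g q)`. -/
theorem nested_commutator_bound (N d q : ℕ) (g : ℝ)
    (F : Finset (Finset (Fin N)))
    (hB : Finset (Fin N) → (LatticeSpace N d →L[ℂ] LatticeSpace N d))
    (hsa : ∀ Y ∈ F, IsSelfAdjoint (hB Y))
    (hne : ∀ Y ∈ F, Y.Nonempty)
    (hsupp : ∀ Y ∈ F, IsSupportedOn N d (hB Y) Y)
    (hloc : ∀ Y ∈ F, Y.card ≤ q)
    (hext : ∀ i : Fin N, ∑ Y ∈ F.filter (fun Y => i ∈ Y), ‖hB Y‖ ≤ g)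
    (H : LatticeSpace N d →L[ℂ] LatticeSpace N d) (hH : H = ∑ Y ∈ F, hB Y)
    (X : Finset (Fin N)) (O : LatticeSpace N d →L[ℂ] LatticeSpace N d)
    (hO : IsSupportedOn N d O X)
    (A : ℝ) (hA : A = ∑ Y ∈ F.filter (fun Y => (Y ∩ X).Nonempty), ‖hB Y‖)
    (n : ℕ) (hn : 1 ≤ n) :
    ‖adPow H n O‖ ≤ 2 ^ n * ‖O‖ * ∏ j ∈ Finset.range n, (A + j * (g * q)) := by
  classical
  by_cases hF : F = ∅
  · subst hF
    have hemp : Fintype.piFinset (fun _ : Fin n => (∅ : Finset (Finset (Fin N)))) = ∅ := by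
      apply Finset.eq_empty_of_forall_notMem
      intro y hy
      exact absurd (Fintype.mem_piFinset.mp hy ⟨0, hn⟩) (Finset.notMem_empty _)
    rw [NC.adPow_rep (hB := hB) (O := O) hH n, hemp, Finset.sum_empty, norm_zero]
    have hA0 : A = 0 := by rw [hA, Finset.filter_empty, Finset.sum_empty]
    have hz : ∏ j ∈ Finset.range n, (A + j * (g * q)) = 0 :=
      Finset.prod_eq_zero (Finset.mem_range.mpr hn) (by simp [hA0])
    rw [hz, mul_zero]
  · obtain ⟨Y₀, hY₀⟩ := Finset.nonempty_iff_ne_empty.mpr hF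
    obtain ⟨i₀, -⟩ := hne Y₀ hY₀
    have hg : 0 ≤ g := le_trans (Finset.sum_nonneg fun _ _ => norm_nonneg _) (hext i₀)
    have hA0 : 0 ≤ A := hA ▸ Finset.sum_nonneg fun _ _ => norm_nonneg _
    have hOm := NC.msupp_of_isSupportedOn hO
    have hsm : ∀ Y ∈ F, NC.Msupp (hB Y) Y := fun Y hY => NC.msupp_of_isSupportedOn (hsupp Y hY)
    calc ‖adPow H n O‖
        = ‖∑ y ∈ Fintype.piFinset (fun _ : Fin n => F), NC.seqComm hB O n y‖ := by
          rw [NC.adPow_rep hH n]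
      _ ≤ ∑ y ∈ Fintype.piFinset (fun _ : Fin n => F), ‖NC.seqComm hB O n y‖ :=
          norm_sum_le _ _
      _ ≤ 2 ^ n * ‖O‖ * ∏ j ∈ Finset.range n, (A + j * (g * q)) :=
          NC.sum_norm_bound hOm hsm hloc hext hA hg hA0 n
end

section
/- Let ℋ be a finite-dimensional complex Hilbert space, ε > 0, L a nonnegative integer, and let (Π_m)_{m ∈ ℤ} be a family of pairwise orthogonal projections on ℋ, only finitely many nonzero, with Σ_m Π_m = 1. Define H' = Σ_m (m + 1/2)·ε·Π_m. If an operator K on ℋ satisfies Π_m K Π_{m'} = 0 whenever |m − m'| > L (a banded condition), then ‖[K, H']‖ ≤ ε·L·(L+1)·‖K‖. -/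
set_option maxHeartbeats 1000000
set_option synthInstance.maxHeartbeats 1000000

open scoped InnerProductSpace

section Aux

variable {E : Type*} [NormedAddCommGroup E] [InnerProductSpace ℂ E]

lemma pyth_aux (s : Finset ℤ) (v : ℤ → E)
    (h : ∀ m ∈ s, ∀ n ∈ s, m ≠ n → ⟪v m, v n⟫_ℂ = 0) :
    ‖∑ m ∈ s, v m‖ ^ 2 = ∑ m ∈ s, ‖v m‖ ^ 2 := by
  have key : (⟪∑ m ∈ s, v m, ∑ m ∈ s, v m⟫_ℂ) = ∑ m ∈ s, ((‖v m‖ ^ 2 : ℝ) : ℂ) := by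
    rw [sum_inner]
    refine Finset.sum_congr rfl fun m hm => ?_
    rw [inner_sum, Finset.sum_eq_single_of_mem m hm
      (fun n hn hne => h m hm n hn (Ne.symm hne))]
    exact_mod_cast inner_self_eq_norm_sq_to_K (𝕜 := ℂ) (v m)
  have key1 : (⟪∑ m ∈ s, v m, ∑ m ∈ s, v m⟫_ℂ)
      = ((‖∑ m ∈ s, v m‖ ^ 2 : ℝ) : ℂ) := by
    rw [inner_self_eq_norm_sq_to_K]
    norm_cast
  have key2 : ((‖∑ m ∈ s, v m‖ ^ 2 : ℝ) : ℂ) = ((∑ m ∈ s, ‖v m‖ ^ 2 : ℝ) : ℂ) := by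
    rw [← key1, key]
    push_cast
    ring
  exact_mod_cast key2

end Aux

/-- For a resolution of the identity `(Π_m)_{m ∈ ℤ}` by pairwise orthogonal projections (finitely
many nonzero), `H' = Σ_m (m + 1/2) ε Π_m`, and an operator `K` that is banded with bandwidth `L`
(`Π_m K Π_{m'} = 0` whenever `|m − m'| > L`), one has `‖[K, H']‖ ≤ ε L (L+1) ‖K‖`. -/
theorem banded_commutator_bound
    {E : Type*} [NormedAddCommGroup E] [InnerProductSpace ℂ E] [FiniteDimensional ℂ E]
    (ε : ℝ) (hε : 0 < ε) (L : ℕ)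
    (Pr : ℤ → (E →L[ℂ] E))
    (hproj : ∀ m : ℤ, IsSelfAdjoint (Pr m) ∧ Pr m * Pr m = Pr m)
    (horth : ∀ m m' : ℤ, m ≠ m' → Pr m * Pr m' = 0)
    (hfin : {m : ℤ | Pr m ≠ 0}.Finite)
    (hres : ∑ᶠ m : ℤ, Pr m = 1)
    (H' : E →L[ℂ] E) (hH' : H' = ∑ᶠ m : ℤ, (((m : ℝ) + 1 / 2) * ε) • Pr m)
    (K : E →L[ℂ] E)
    (hband : ∀ m m' : ℤ, (L : ℤ) < |m - m'| → Pr m * K * Pr m' = 0) :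
    ‖K * H' - H' * K‖ ≤ ε * L * (L + 1) * ‖K‖ := by
  classical
  set F : Finset ℤ := hfin.toFinset with hF
  have hmemF : ∀ m : ℤ, m ∈ F ↔ Pr m ≠ 0 := fun m => hfin.mem_toFinset
  have hPr0 : ∀ m ∉ F, Pr m = 0 := fun m hm => not_not.1 (fun h => hm ((hmemF m).2 h))
  have hres' : ∑ m ∈ F, Pr m = 1 := by
    rw [← hres, finsum_eq_sum Pr hfin]
    rfl
  have hH : H' = ∑ m ∈ F, (((m : ℝ) + 1 / 2) * ε) • Pr m := by
    rw [hH']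
    have hsupp : (Function.support fun m : ℤ => (((m : ℝ) + 1 / 2) * ε) • Pr m) ⊆ ↑F := by
      intro m hm
      rw [Function.mem_support] at hm
      have hne : Pr m ≠ 0 := fun h0 => hm (by rw [h0, smul_zero])
      show m ∈ (hfin.toFinset : Set ℤ)
      rw [Set.Finite.coe_toFinset]
      exact hne
    exact finsum_eq_sum_of_support_subset _ hsupp
  -- adjoint facts
  have hadj : ∀ (m : ℤ) (u w : E), ⟪Pr m u, w⟫_ℂ = ⟪u, Pr m w⟫_ℂ := by
    intro m u w
    conv_lhs => rw [← (hproj m).1.adjoint_eq]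
    exact ContinuousLinearMap.adjoint_inner_left _ _ _
  have horthx : ∀ m n : ℤ, m ≠ n → ∀ u v : E, ⟪Pr m u, Pr n v⟫_ℂ = 0 := by
    intro m n hmn u v
    rw [hadj]
    have : Pr m (Pr n v) = (Pr m * Pr n) v := rfl
    rw [this, horth m n hmn]
    simp
  -- projections are contractions
  have hPle : ∀ (m : ℤ) (x : E), ‖Pr m x‖ ≤ ‖x‖ := by
    intro m x
    have h2 : ⟪Pr m x, Pr m x⟫_ℂ = ⟪x, Pr m x⟫_ℂ := by
      rw [hadj]
      have h5 : Pr m (Pr m x) = (Pr m * Pr m) x := rfl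
      rw [h5, (hproj m).2]
    have h4 : ‖Pr m x‖ ^ 2 ≤ ‖x‖ * ‖Pr m x‖ := by
      calc ‖Pr m x‖ ^ 2 = RCLike.re ⟪Pr m x, Pr m x⟫_ℂ := (inner_self_eq_norm_sq _).symm
        _ = RCLike.re ⟪x, Pr m x⟫_ℂ := by rw [h2]
        _ ≤ ‖x‖ * ‖Pr m x‖ := re_inner_le_norm _ _
    rcases eq_or_lt_of_le (norm_nonneg (Pr m x)) with h | h
    · rw [← h]; exact norm_nonneg x
    · nlinarith
  -- pythagoras for the resolution applied to x
  have hresx : ∀ x : E, ∑ m ∈ F, ‖Pr m x‖ ^ 2 = ‖x‖ ^ 2 := by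
    intro x
    rw [← pyth_aux F (fun m => Pr m x) (fun m hm n hn hne => horthx m n hne x x)]
    congr 1
    have : ∑ m ∈ F, Pr m x = (∑ m ∈ F, Pr m) x := by
      rw [ContinuousLinearMap.sum_apply]
    rw [this, hres']
    simp
  -- block norm bound
  have hblock : ∀ (A : E →L[ℂ] E) (d : ℤ), ‖∑ m ∈ F, Pr m * A * Pr (m + d)‖ ≤ ‖A‖ := by
    intro A d
    refine ContinuousLinearMap.opNorm_le_bound _ (norm_nonneg A) fun x => ?_
    have hsq : ‖(∑ m ∈ F, Pr m * A * Pr (m + d)) x‖ ^ 2 ≤ (‖A‖ * ‖x‖) ^ 2 := by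
      have happ : (∑ m ∈ F, Pr m * A * Pr (m + d)) x
          = ∑ m ∈ F, Pr m (A (Pr (m + d) x)) := by
        rw [ContinuousLinearMap.sum_apply]
        exact Finset.sum_congr rfl fun m _ => rfl
      rw [happ, pyth_aux F _ (fun m hm n hn hne => horthx m n hne _ _)]
      have step1 : ∑ m ∈ F, ‖Pr m (A (Pr (m + d) x))‖ ^ 2
          ≤ ∑ m ∈ F, ‖A‖ ^ 2 * ‖Pr (m + d) x‖ ^ 2 := by
        refine Finset.sum_le_sum fun m _ => ?_
        have h1 : ‖Pr m (A (Pr (m + d) x))‖ ≤ ‖A‖ * ‖Pr (m + d) x‖ :=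
          le_trans (hPle m _) (A.le_opNorm _)
        have h0 : (0:ℝ) ≤ ‖Pr m (A (Pr (m + d) x))‖ := norm_nonneg _
        calc ‖Pr m (A (Pr (m + d) x))‖ ^ 2 ≤ (‖A‖ * ‖Pr (m + d) x‖) ^ 2 := by
              exact pow_le_pow_left₀ h0 h1 2
          _ = ‖A‖ ^ 2 * ‖Pr (m + d) x‖ ^ 2 := by ring
      have step2 : ∑ m ∈ F, ‖Pr (m + d) x‖ ^ 2 ≤ ‖x‖ ^ 2 := by
        have hmap : ∑ m ∈ F, ‖Pr (m + d) x‖ ^ 2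
            = ∑ k ∈ F.image (· + d), ‖Pr k x‖ ^ 2 := by
          rw [Finset.sum_image (fun a _ b _ h => by omega)]
        rw [hmap, ← hresx x]
        have hsub : F.image (· + d) ⊆ F ∪ F.image (· + d) := Finset.subset_union_right
        calc ∑ k ∈ F.image (· + d), ‖Pr k x‖ ^ 2
            ≤ ∑ k ∈ F ∪ F.image (· + d), ‖Pr k x‖ ^ 2 :=
              Finset.sum_le_sum_of_subset_of_nonneg hsub (fun k _ _ => by positivity)
          _ = ∑ k ∈ F, ‖Pr k x‖ ^ 2 := by
              refine (Finset.sum_subset Finset.subset_union_left fun k _ hk => ?_).symm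
              rw [hPr0 k hk]; simp
      calc ∑ m ∈ F, ‖Pr m (A (Pr (m + d) x))‖ ^ 2
          ≤ ∑ m ∈ F, ‖A‖ ^ 2 * ‖Pr (m + d) x‖ ^ 2 := step1
        _ = ‖A‖ ^ 2 * ∑ m ∈ F, ‖Pr (m + d) x‖ ^ 2 := by rw [Finset.mul_sum]
        _ ≤ ‖A‖ ^ 2 * ‖x‖ ^ 2 := by
            exact mul_le_mul_of_nonneg_left step2 (by positivity)
        _ = (‖A‖ * ‖x‖) ^ 2 := by ring
    have h0 : (0:ℝ) ≤ ‖A‖ * ‖x‖ := by positivity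
    nlinarith [norm_nonneg ((∑ m ∈ F, Pr m * A * Pr (m + d)) x)]
  -- the elementary blocks
  set T : ℤ → ℤ → (E →L[ℂ] E) :=
    fun m m' => (((m' : ℝ) - (m : ℝ)) * ε) • (Pr m * K * Pr m') with hT
  -- decomposition of the commutator
  have hdecomp : K * H' - H' * K
      = ∑ d ∈ Finset.Icc (-(L:ℤ)) (L:ℤ), ((d : ℝ) * ε) • ∑ m ∈ F, Pr m * K * Pr (m + d) := by
    have hKP : ∀ m' : ℤ, K * Pr m' = ∑ m ∈ F, Pr m * K * Pr m' := by
      intro m'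
      calc K * Pr m' = 1 * K * Pr m' := by rw [one_mul]
        _ = (∑ m ∈ F, Pr m) * K * Pr m' := by rw [hres']
        _ = ∑ m ∈ F, Pr m * K * Pr m' := by rw [Finset.sum_mul, Finset.sum_mul]
    have hPK : ∀ m : ℤ, Pr m * K = ∑ m' ∈ F, Pr m * K * Pr m' := by
      intro m
      calc Pr m * K = Pr m * K * 1 := by rw [mul_one]
        _ = Pr m * K * (∑ m' ∈ F, Pr m') := by rw [hres']
        _ = ∑ m' ∈ F, Pr m * K * Pr m' := by rw [Finset.mul_sum]
    have hKH : K * H'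
        = ∑ m' ∈ F, ∑ m ∈ F, (((m' : ℝ) + 1 / 2) * ε) • (Pr m * K * Pr m') := by
      rw [hH, Finset.mul_sum]
      refine Finset.sum_congr rfl fun m' _ => ?_
      rw [mul_smul_comm, hKP m', Finset.smul_sum]
    have hHK : H' * K
        = ∑ m ∈ F, ∑ m' ∈ F, (((m : ℝ) + 1 / 2) * ε) • (Pr m * K * Pr m') := by
      rw [hH, Finset.sum_mul]
      refine Finset.sum_congr rfl fun m _ => ?_
      conv_lhs => rw [smul_mul_assoc, hPK m]
      rw [Finset.smul_sum]
    have hcomm : K * H' - H' * K = ∑ m ∈ F, ∑ m' ∈ F, T m m' := by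
      rw [hKH, Finset.sum_comm, hHK, ← Finset.sum_sub_distrib]
      refine Finset.sum_congr rfl fun m _ => ?_
      rw [← Finset.sum_sub_distrib]
      refine Finset.sum_congr rfl fun m' _ => ?_
      rw [hT, ← sub_smul]
      congr 1
      ring
    have hinner : ∀ m ∈ F, ∑ m' ∈ F, T m m'
        = ∑ d ∈ Finset.Icc (-(L:ℤ)) (L:ℤ), T m (m + d) := by
      intro m _
      have hA : ∑ m' ∈ F, T m m' = ∑ m' ∈ F ∩ Finset.Icc (m - L) (m + L), T m m' := by
        refine (Finset.sum_subset Finset.inter_subset_left fun m' hm' hnot => ?_).symm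
        have hout : (L:ℤ) < |m - m'| := by
          have : m' ∉ Finset.Icc (m - (L:ℤ)) (m + L) := fun hc => hnot (Finset.mem_inter.2 ⟨hm', hc⟩)
          rw [Finset.mem_Icc] at this
          rcases lt_or_ge (L:ℤ) (m - m') with h | h
          · exact lt_of_lt_of_le h (le_abs_self _)
          · have : (L:ℤ) < m' - m := by omega
            calc (L:ℤ) < m' - m := this
              _ = |m' - m| := (abs_of_pos (by omega)).symm
              _ = |m - m'| := abs_sub_comm _ _
        rw [hT]
        simp only [hband m m' hout, smul_zero]
      have hB : ∑ m' ∈ Finset.Icc (m - (L:ℤ)) (m + L), T m m'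
          = ∑ m' ∈ F ∩ Finset.Icc (m - L) (m + L), T m m' := by
        refine (Finset.sum_subset Finset.inter_subset_right fun m' _ hnot => ?_).symm
        have : m' ∉ F := fun hc => hnot (Finset.mem_inter.2 ⟨hc, ‹_›⟩)
        rw [hT]
        simp only [hPr0 m' this, mul_zero, smul_zero]
      have hC : ∑ d ∈ Finset.Icc (-(L:ℤ)) (L:ℤ), T m (m + d)
          = ∑ m' ∈ Finset.Icc (m - (L:ℤ)) (m + L), T m m' := by
        have : Finset.Icc (m - (L:ℤ)) (m + L) = (Finset.Icc (-(L:ℤ)) L).map (addLeftEmbedding m) := by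
          rw [Finset.map_add_left_Icc]
          congr 1 <;> ring
        rw [this, Finset.sum_map]
        rfl
      rw [hA, hC, hB]
    rw [hcomm, Finset.sum_congr rfl hinner, Finset.sum_comm]
    refine Finset.sum_congr rfl fun d _ => ?_
    rw [Finset.smul_sum]
    refine Finset.sum_congr rfl fun m _ => ?_
    rw [hT]
    congr 2
    push_cast
    ring
  -- sum of |d|
  have habs : ∀ L : ℕ, ∑ d ∈ Finset.Icc (-(L:ℤ)) (L:ℤ), (|d| : ℝ) = (L : ℝ) * (L + 1) := by
    intro L
    induction L with
    | zero => simp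
    | succ n ih =>
      have hset : Finset.Icc (-(n+1:ℤ)) (n+1:ℤ)
          = insert (-(n+1:ℤ)) (insert (n+1:ℤ) (Finset.Icc (-(n:ℤ)) (n:ℤ))) := by
        ext x
        simp only [Finset.mem_Icc, Finset.mem_insert]
        omega
      have h1 : (-(n+1:ℤ)) ∉ insert (n+1:ℤ) (Finset.Icc (-(n:ℤ)) (n:ℤ)) := by
        simp only [Finset.mem_insert, Finset.mem_Icc]
        omega
      have h2 : (n+1:ℤ) ∉ Finset.Icc (-(n:ℤ)) (n:ℤ) := by
        simp only [Finset.mem_Icc]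
        omega
      have hcast : ((n:ℤ)+1 : ℤ) = ((n+1 : ℕ) : ℤ) := by push_cast; ring
      rw [show (-((n+1:ℕ):ℤ)) = (-(n+1:ℤ)) by push_cast; ring,
        show (((n+1:ℕ)):ℤ) = ((n+1:ℤ)) by push_cast; ring,
        hset, Finset.sum_insert h1, Finset.sum_insert h2, ih]
      push_cast
      rw [abs_neg, abs_of_nonneg (by positivity : (0:ℝ) ≤ (n:ℝ) + 1)]
      ring
  -- final estimate
  rw [hdecomp]
  calc ‖∑ d ∈ Finset.Icc (-(L:ℤ)) (L:ℤ), ((d : ℝ) * ε) • ∑ m ∈ F, Pr m * K * Pr (m + d)‖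
      ≤ ∑ d ∈ Finset.Icc (-(L:ℤ)) (L:ℤ), ‖((d : ℝ) * ε) • ∑ m ∈ F, Pr m * K * Pr (m + d)‖ :=
        norm_sum_le _ _
    _ ≤ ∑ d ∈ Finset.Icc (-(L:ℤ)) (L:ℤ), (|d| : ℝ) * (ε * ‖K‖) := by
        refine Finset.sum_le_sum fun d _ => ?_
        refine le_trans (norm_smul_le ((d:ℝ) * ε) (∑ m ∈ F, Pr m * K * Pr (m + d))) ?_
        rw [Real.norm_eq_abs, abs_mul, abs_of_pos hε, mul_assoc]
        exact mul_le_mul_of_nonneg_left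
          (mul_le_mul_of_nonneg_left (hblock K d) hε.le) (abs_nonneg _)
    _ = (∑ d ∈ Finset.Icc (-(L:ℤ)) (L:ℤ), (|d| : ℝ)) * (ε * ‖K‖) := by
        rw [← Finset.sum_mul]
    _ = (L : ℝ) * (L + 1) * (ε * ‖K‖) := by rw [habs L]
    _ = ε * L * (L + 1) * ‖K‖ := by ring
end
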